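/- Let A ∈ ℝ^{m×n}, b ∈ ℝ^m, λ > 0, and let x̄ be a solution of the SR-LASSO satisfying the intermediate assumption: Ax̄ ≠ b, and with ȳ := (b − Ax̄)/‖Ax̄ − b‖₂ and J := {i ∈ {1,…,n} : |Aᵢᵀȳ| = λ}, one has ker A_J = {0} and b ∉ range(A_J). Then the weak assumption holds at x̄, i.e., with I := supp(x̄): (i) ker A_I = {0} and b ∉ range(A_I); (ii) there exists z ∈ ℝ^m with ⟨ȳ, z⟩ = 0 and A_Iᵀz = 0 such that ‖A_{I^C}ᵀ(ȳ + z)‖_∞ < λ. -/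

import Mathlib

open Matrix Filter Topology
open scoped BigOperators Classical

noncomputable def l2 {k : ℕ} (x : Fin k → ℝ) : ℝ := Real.sqrt (∑ i, (x i) ^ 2)

noncomputable def l1 {k : ℕ} (x : Fin k → ℝ) : ℝ := ∑ i, |x i|

noncomputable def linf {k : ℕ} (x : Fin k → ℝ) : ℝ := sSup (Set.range fun i => |x i|)

noncomputable def dotp {k : ℕ} (x y : Fin k → ℝ) : ℝ := ∑ i, x i * y i

noncomputable def pinv {m s : ℕ} (M : Matrix (Fin m) (Fin s) ℝ) :
    Matrix (Fin s) (Fin m) ℝ := (Mᵀ * M)⁻¹ * Mᵀ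

/-- The SR-LASSO objective f_{A,b,λ}(x) := ‖Ax − b‖₂ + λ‖x‖₁. -/
noncomputable def srObj {m n : ℕ} (A : Matrix (Fin m) (Fin n) ℝ) (b : Fin m → ℝ)
    (lam : ℝ) (x : Fin n → ℝ) : ℝ := l2 (A.mulVec x - b) + lam * l1 x

/-- x is a solution of the SR-LASSO with data (A, b, λ). -/
def IsSol {m n : ℕ} (A : Matrix (Fin m) (Fin n) ℝ) (b : Fin m → ℝ) (lam : ℝ)
    (x : Fin n → ℝ) : Prop := ∀ w : Fin n → ℝ, srObj A b lam x ≤ srObj A b lam w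

/-- y is feasible for the SR-LASSO dual: ‖Aᵀy‖_∞ ≤ λ and ‖y‖₂ ≤ 1. -/
noncomputable def DualFeas {m n : ℕ} (A : Matrix (Fin m) (Fin n) ℝ) (lam : ℝ)
    (y : Fin m → ℝ) : Prop := linf (Aᵀ.mulVec y) ≤ lam ∧ l2 y ≤ 1

/-- y is a solution of the SR-LASSO dual: it is feasible and maximizes ⟨b, ·⟩
over the feasible set. -/
noncomputable def IsDualSol {m n : ℕ} (A : Matrix (Fin m) (Fin n) ℝ) (b : Fin m → ℝ)
    (lam : ℝ) (y : Fin m → ℝ) : Prop :=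
  DualFeas A lam y ∧ ∀ y' : Fin m → ℝ, DualFeas A lam y' → dotp b y' ≤ dotp b y

lemma l2_nonneg {k : ℕ} (v : Fin k → ℝ) : 0 ≤ l2 v := Real.sqrt_nonneg _

lemma l2_pos_of_ne {k : ℕ} (v : Fin k → ℝ) (hv : v ≠ 0) : 0 < l2 v := by
  have h : 0 < ∑ i, (v i)^2 := by
    obtain ⟨j, hj⟩ : ∃ j, v j ≠ 0 := by
      by_contra h; push_neg at h; exact hv (funext h)
    apply Finset.sum_pos' (fun i _ => sq_nonneg _) ⟨j, Finset.mem_univ j, by positivity⟩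
  exact Real.sqrt_pos.mpr h

lemma sqrt_tangent (a x : ℝ) (ha : 0 < a) (hx : 0 ≤ x) :
    Real.sqrt x ≤ (x + a) / (2 * Real.sqrt a) := by
  have hsa : 0 < Real.sqrt a := Real.sqrt_pos.mpr ha
  rw [le_div_iff₀ (by positivity)]
  nlinarith [sq_nonneg (Real.sqrt x - Real.sqrt a), Real.sq_sqrt hx, Real.sq_sqrt ha.le,
    Real.sqrt_nonneg x]

lemma l2_le {k : ℕ} (r u : Fin k → ℝ) (hr : 0 < l2 r) :
    l2 (r + u) ≤ l2 r + (∑ j, r j * u j) / l2 r + (∑ j, (u j)^2) / (2 * l2 r) := by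
  have ha : 0 < ∑ i, (r i)^2 := by
    have := hr; rw [l2] at this; exact Real.sqrt_pos.mp this
  have hexp : ∑ i, ((r + u) i)^2 = (∑ i, (r i)^2) + (2 * ∑ j, r j * u j + ∑ j, (u j)^2) := by
    simp only [Pi.add_apply]
    rw [show (∑ x, (r x + u x)^2) = ∑ x, ((r x)^2 + (2*(r x * u x) + (u x)^2)) from
      Finset.sum_congr rfl (fun i _ => by ring)]
    rw [Finset.sum_add_distrib, Finset.sum_add_distrib, ← Finset.mul_sum]
  have hx : (0:ℝ) ≤ ∑ i, ((r + u) i)^2 := Finset.sum_nonneg fun i _ => sq_nonneg _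
  have hb := sqrt_tangent (∑ i, (r i)^2) (∑ i, ((r + u) i)^2) ha hx
  have hs : Real.sqrt (∑ i, (r i)^2) = l2 r := rfl
  rw [hs] at hb
  have h2 : l2 r ^ 2 = ∑ i, (r i)^2 := by rw [← hs]; exact Real.sq_sqrt ha.le
  have heq : (∑ i, ((r + u) i)^2 + ∑ i, (r i)^2) / (2 * l2 r)
      = l2 r + (∑ j, r j * u j) / l2 r + (∑ j, (u j)^2) / (2 * l2 r) := by
    rw [hexp, ← h2]; field_simp; ring
  calc l2 (r + u) ≤ _ := hb
    _ = _ := heq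

lemma key_ineq {m n : ℕ} (A : Matrix (Fin m) (Fin n) ℝ) (b : Fin m → ℝ)
    (lam : ℝ) (xbar : Fin n → ℝ) (hsol : IsSol A b lam xbar)
    (hres : A.mulVec xbar ≠ b) (ybar : Fin m → ℝ)
    (hybar : ybar = (l2 (A.mulVec xbar - b))⁻¹ • (b - A.mulVec xbar))
    (i : Fin n) (s D ε : ℝ) (hε : 0 < ε)
    (habs : ∀ t : ℝ, 0 < t → t < ε → |xbar i + t * s| = |xbar i| + t * D) :
    s * (∑ j, A j i * ybar j) ≤ lam * D := by
  set r : Fin m → ℝ := A.mulVec xbar - b with hr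
  have hrne : r ≠ 0 := fun h => hres (by rwa [hr, sub_eq_zero] at h)
  set R := l2 r with hR
  have hRpos : 0 < R := l2_pos_of_ne r hrne
  set G := ∑ j, A j i * ybar j with hG
  set Q := ∑ j, (A j i)^2 with hQ
  have hrg : ∑ j, r j * A j i = -R * G := by
    have h1 : G = -R⁻¹ * ∑ j, r j * A j i := by
      rw [hG, hybar]
      rw [Finset.mul_sum]
      refine Finset.sum_congr rfl fun j _ => ?_
      simp only [Pi.smul_apply, Pi.sub_apply, smul_eq_mul]
      have hrj : r j = (A.mulVec xbar) j - b j := rfl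
      rw [hrj]; ring
    rw [h1]
    field_simp
  have step : ∀ t : ℝ, 0 < t → t < ε → s * G ≤ lam * D + t * (s^2 * Q / (2*R)) := by
    intro t ht1 ht2
    set w := xbar + (t*s) • (Pi.single i (1:ℝ) : Fin n → ℝ) with hwdef
    have hw : A.mulVec w - b = r + (t*s) • (fun j => A j i) := by
      rw [hwdef, Matrix.mulVec_add, Matrix.mulVec_smul, Matrix.mulVec_single]
      funext j
      simp [hr, mul_one]
      ring
    have hl1 : l1 w = l1 xbar + t * D := by
      unfold l1
      rw [← Finset.sum_erase_add _ _ (Finset.mem_univ i),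
        ← Finset.sum_erase_add Finset.univ (fun k => |xbar k|) (Finset.mem_univ i)]
      have h1 : ∀ k ∈ Finset.univ.erase i, |w k| = |xbar k| := fun k hk => by
        simp [hwdef, Pi.single_eq_of_ne (Finset.ne_of_mem_erase hk)]
      rw [Finset.sum_congr rfl h1]
      have hwi : w i = xbar i + t*s := by simp [hwdef]
      rw [hwi, habs t ht1 ht2]; ring
    have hopt := hsol w
    unfold srObj at hopt
    rw [hw, hl1, ← hr, ← hR] at hopt
    have hle2 := l2_le r ((t*s) • (fun j => A j i)) hRpos
    have hsum1 : ∑ j, r j * ((t*s) • (fun j => A j i)) j = (t*s) * ∑ j, r j * A j i := by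
      rw [Finset.mul_sum]
      exact Finset.sum_congr rfl fun j _ => by simp [smul_eq_mul]; ring
    have hsum2 : ∑ j, (((t*s) • (fun j => A j i)) j)^2 = (t*s)^2 * Q := by
      rw [hQ, Finset.mul_sum]
      exact Finset.sum_congr rfl fun j _ => by simp [smul_eq_mul]; ring
    rw [hsum1, hsum2, hrg] at hle2
    have hdiv : (t*s) * (-R * G) / R = -(t*s) * G := by field_simp
    rw [hdiv] at hle2
    have hQR : (t*s)^2 * Q / (2*R) = t * (t * (s^2 * Q / (2*R))) := by field_simp
    rw [hQR] at hle2
    have hcomb : 0 ≤ -(t*s)*G + t*(t*(s^2*Q/(2*R))) + lam * (t*D) := by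
      have := hopt.trans (by linarith : l2 (r + (t*s) • (fun j => A j i)) + lam * (l1 xbar + t*D)
        ≤ R + (-(t*s)*G + t*(t*(s^2*Q/(2*R)))) + lam * (l1 xbar + t*D))
      linarith
    nlinarith [hcomb, ht1]
  have hev : ∀ᶠ t in 𝓝[>](0:ℝ), s*G ≤ lam*D + t*(s^2*Q/(2*R)) := by
    filter_upwards [Ioo_mem_nhdsGT_of_mem (Set.left_mem_Ico.mpr hε)] with t ht
    exact step t ht.1 ht.2
  have htend : Tendsto (fun t : ℝ => lam*D + t*(s^2*Q/(2*R))) (𝓝[>](0:ℝ)) (𝓝 (lam*D)) := by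
    have hc : Continuous fun t : ℝ => lam*D + t*(s^2*Q/(2*R)) := by continuity
    have h0 := hc.tendsto 0
    simp only [zero_mul, add_zero] at h0
    exact h0.mono_left nhdsWithin_le_nhds
  exact ge_of_tendsto htend hev

lemma fredholm {k l : ℕ} (M : Matrix (Fin k) (Fin l) ℝ) (d : Fin k → ℝ)
    (h : ∀ μ : Fin k → ℝ, Mᵀ.mulVec μ = 0 → ∑ j, d j * μ j = 0) :
    ∃ z : Fin l → ℝ, M.mulVec z = d := by
  set L := Matrix.toEuclideanLin M with hL
  set W : Submodule ℝ (EuclideanSpace ℝ (Fin k)) := LinearMap.range L with hW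
  set d' : EuclideanSpace ℝ (Fin k) := (WithLp.equiv 2 (Fin k → ℝ)).symm d with hd'
  set μ' : EuclideanSpace ℝ (Fin k) := d' - (W.orthogonalProjectionOnto d' : EuclideanSpace ℝ (Fin k)) with hμ'
  have hmem : μ' ∈ Wᗮ := Submodule.sub_starProjection_mem_orthogonal (K := W) d'
  have hMt : Mᵀ.mulVec (fun j => μ' j) = 0 := by
    funext i
    have hcol : L ((WithLp.equiv 2 (Fin l → ℝ)).symm (Pi.single i 1)) ∈ W :=
      LinearMap.mem_range_self L _
    have h0 := hmem _ hcol
    rw [real_inner_comm, PiLp.inner_apply] at h0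
    simp only [Pi.zero_apply]
    rw [← h0, Matrix.toEuclideanLin_apply]
    simp [Matrix.mulVec, dotProduct, mul_comm]
  have hsum := h _ hMt
  have hinner : (inner ℝ d' μ' : ℝ) = ∑ j, d j * μ' j := by
    rw [PiLp.inner_apply]
    refine Finset.sum_congr rfl fun j _ => ?_
    simp [hd', mul_comm]
  have hproj : (inner ℝ ((W.orthogonalProjectionOnto d' : EuclideanSpace ℝ (Fin k))) μ' : ℝ) = 0 :=
    hmem _ (W.orthogonalProjectionOnto d').2
  have hnorm : (inner ℝ μ' μ' : ℝ) = 0 := by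
    have h1 : (inner ℝ d' μ' : ℝ) = inner ℝ ((W.orthogonalProjectionOnto d' : EuclideanSpace ℝ (Fin k)) : EuclideanSpace ℝ (Fin k)) μ' + inner ℝ μ' μ' := by
      rw [← inner_add_left]
      congr 1
      simp [hμ']
    rw [hinner, hsum, hproj] at h1
    linarith
  have hz : μ' = 0 := inner_self_eq_zero (𝕜 := ℝ) (x := μ').mp hnorm
  have hdW : d' ∈ W := by
    have h2 : d' = (W.orthogonalProjectionOnto d' : EuclideanSpace ℝ (Fin k)) := by
      have := hz
      rw [hμ', sub_eq_zero] at this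
      exact this
    rw [h2]; exact (W.orthogonalProjectionOnto d').2
  obtain ⟨z', hz'⟩ := hdW
  refine ⟨(WithLp.equiv 2 (Fin l → ℝ)) z', ?_⟩
  rw [Matrix.toEuclideanLin_apply] at hz'
  funext j
  have := congrFun (congrArg (WithLp.equiv 2 (Fin k → ℝ)) hz') j
  simpa [hd'] using this

/-- intermediate implies weak: if x̄ solves the SR-LASSO,
Ax̄ ≠ b, and with ȳ := (b − Ax̄)/‖Ax̄ − b‖₂ and
J := {i : |Aᵢᵀȳ| = λ} one has ker A_J = {0} and b ∉ range A_J, then the weak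
assumption holds at x̄: with I := supp(x̄), (i) ker A_I = {0}, b ∉ range A_I;
(ii) ∃ z ⊥ ȳ with A_Iᵀz = 0 and ‖A_{I^C}ᵀ(ȳ + z)‖_∞ < λ. -/
theorem stmt_10 {m n : ℕ} (A : Matrix (Fin m) (Fin n) ℝ) (b : Fin m → ℝ)
    (lam : ℝ) (hlam : 0 < lam) (xbar : Fin n → ℝ)
    (hsol : IsSol A b lam xbar) (hres : A.mulVec xbar ≠ b)
    (ybar : Fin m → ℝ)
    (hybar : ybar = (l2 (A.mulVec xbar - b))⁻¹ • (b - A.mulVec xbar))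
    -- ker A_J = {0}:
    (hkerJ : ∀ u : Fin n → ℝ,
      (∀ i, |Aᵀ.mulVec ybar i| ≠ lam → u i = 0) → A.mulVec u = 0 → u = 0)
    -- b ∉ rge A_J:
    (hrgeJ : ¬ ∃ u : Fin n → ℝ,
      (∀ i, |Aᵀ.mulVec ybar i| ≠ lam → u i = 0) ∧ A.mulVec u = b) :
    -- (i) ker A_I = {0} and b ∉ rge A_I:
    (∀ u : Fin n → ℝ, (∀ i, xbar i = 0 → u i = 0) → A.mulVec u = 0 → u = 0) ∧
    (¬ ∃ u : Fin n → ℝ, (∀ i, xbar i = 0 → u i = 0) ∧ A.mulVec u = b) ∧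
    -- (ii):
    (∃ z : Fin m → ℝ, dotp ybar z = 0 ∧
      (∀ i, xbar i ≠ 0 → dotp (fun r => A r i) z = 0) ∧
      (∀ i, xbar i = 0 → |dotp (fun r => A r i) (ybar + z)| < lam)) := by
  classical
  set r : Fin m → ℝ := A.mulVec xbar - b with hr
  have hrne : r ≠ 0 := fun h => hres (by rwa [hr, sub_eq_zero] at h)
  set R := l2 r with hR
  have hRpos : 0 < R := l2_pos_of_ne r hrne
  set g : Fin n → ℝ := fun i => ∑ j, A j i * ybar j with hgdef
  have hg : ∀ i, Aᵀ.mulVec ybar i = g i := by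
    intro i
    simp [Matrix.mulVec, dotProduct, Matrix.transpose_apply, hgdef]
  have key := key_ineq A b lam xbar hsol hres ybar hybar
  have hIJ : ∀ i, xbar i ≠ 0 → |g i| = lam := by
    intro i hx
    rcases lt_or_gt_of_ne hx with hneg | hpos
    · have h1 := key i (-1) 1 1 one_pos (fun t ht _ => by
        rw [abs_of_neg hneg, abs_of_neg (by linarith : xbar i + t * (-1) < 0)]; try ring)
      have h2 := key i 1 (-1) (-(xbar i)) (by linarith) (fun t ht ht2 => by
        rw [abs_of_neg hneg, abs_of_neg (by linarith : xbar i + t * 1 < 0)]; try ring)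
      have hgl : g i = -lam := by
        rw [hgdef]; simp only
        have e1 : (-1 : ℝ) * (∑ j, A j i * ybar j) ≤ lam * 1 := h1
        have e2 : (1 : ℝ) * (∑ j, A j i * ybar j) ≤ lam * (-1) := h2
        linarith
      rw [hgl, abs_neg, abs_of_pos hlam]
    · have h1 := key i 1 1 1 one_pos (fun t ht _ => by
        rw [abs_of_pos hpos, abs_of_pos (by linarith : 0 < xbar i + t * 1)]; try ring)
      have h2 := key i (-1) (-1) (xbar i) hpos (fun t ht ht2 => by
        rw [abs_of_pos hpos, abs_of_pos (by linarith : 0 < xbar i + t * (-1))]; try ring)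
      have hgl : g i = lam := by
        rw [hgdef]; simp only
        have e1 : (1 : ℝ) * (∑ j, A j i * ybar j) ≤ lam * 1 := h1
        have e2 : (-1 : ℝ) * (∑ j, A j i * ybar j) ≤ lam * (-1) := h2
        linarith
      rw [hgl, abs_of_pos hlam]
  have habs_le : ∀ i, |g i| ≤ lam := by
    intro i
    by_cases hx : xbar i = 0
    · have h1 := key i 1 1 1 one_pos (fun t ht _ => by
        rw [hx]; simpa using abs_of_pos ht)
      have h2 := key i (-1) 1 1 one_pos (fun t ht _ => by
        rw [hx]
        simp only [zero_add, abs_zero]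
        rw [mul_neg_one, abs_neg, mul_one]
        exact abs_of_pos ht)
      have e1 : (1 : ℝ) * g i ≤ lam * 1 := h1
      have e2 : (-1 : ℝ) * g i ≤ lam * 1 := h2
      exact abs_le.mpr ⟨by linarith, by linarith⟩
    · exact (hIJ i hx).le
  have hIJ' : ∀ i, |Aᵀ.mulVec ybar i| ≠ lam → xbar i = 0 := by
    intro i hi
    by_contra hx
    exact hi (by rw [hg i]; exact hIJ i hx)
  refine ⟨?_, ?_, ?_⟩
  · intro u hu hAu
    exact hkerJ u (fun i hi => hu i (hIJ' i hi)) hAu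
  · rintro ⟨u, hu, hAu⟩
    exact hrgeJ ⟨u, fun i hi => hu i (hIJ' i hi), hAu⟩
  -- part (ii)
  set M : Matrix (Fin (n+1)) (Fin m) ℝ := fun p j =>
    Fin.lastCases (ybar j) (fun i => if |g i| = lam then A j i else 0) p with hM
  set d : Fin (n+1) → ℝ :=
    fun p => Fin.lastCases 0 (fun i => if |g i| = lam ∧ xbar i = 0 then -(g i) else 0) p with hd
  have hMrow : ∀ (i : Fin n) (j : Fin m), M i.castSucc j = if |g i| = lam then A j i else 0 := by
    intro i j; rw [hM]; exact Fin.lastCases_castSucc ..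
  have hMlast : ∀ j, M (Fin.last n) j = ybar j := by
    intro j; rw [hM]; exact Fin.lastCases_last ..
  have hdrow : ∀ i : Fin n, d i.castSucc = if |g i| = lam ∧ xbar i = 0 then -(g i) else 0 := by
    intro i; rw [hd]; exact Fin.lastCases_castSucc ..
  have hdlast : d (Fin.last n) = 0 := by rw [hd]; exact Fin.lastCases_last ..
  have hfred : ∀ μ : Fin (n+1) → ℝ, Mᵀ.mulVec μ = 0 → ∑ p, d p * μ p = 0 := by
    intro μ hμ
    set β := μ (Fin.last n) with hβ
    set u : Fin n → ℝ := fun i => if |g i| = lam then μ i.castSucc else 0 with hu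
    have hAu : ∀ j, (A.mulVec u) j + β * ybar j = 0 := by
      intro j
      have h0 := congrFun hμ j
      have h1 : Mᵀ.mulVec μ j = ∑ p, M p j * μ p := by
        simp [Matrix.mulVec, dotProduct, Matrix.transpose_apply]
      rw [h1] at h0
      rw [Fin.sum_univ_castSucc] at h0
      have h2 : ∑ i : Fin n, M i.castSucc j * μ i.castSucc = (A.mulVec u) j := by
        have h3 : (A.mulVec u) j = ∑ i, A j i * u i := by
          simp [Matrix.mulVec, dotProduct]
        rw [h3]
        refine Finset.sum_congr rfl fun i _ => ?_
        rw [hMrow i j, hu]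
        simp only
        split_ifs with hc
        · simp
        · simp
      rw [h2, hMlast j] at h0
      rw [Pi.zero_apply] at h0
      linarith [h0]
    by_cases hb0 : β = 0
    · have hAu0 : A.mulVec u = 0 := by
        funext j
        have := hAu j
        rw [hb0] at this
        simpa using this
      have hu0 : u = 0 := by
        apply hkerJ u _ hAu0
        intro i hi
        rw [hg i] at hi
        rw [hu]
        simp [hi]
      rw [Fin.sum_univ_castSucc, hdlast]
      have hz : ∀ i : Fin n, d i.castSucc * μ i.castSucc = 0 := by
        intro i
        rw [hdrow i]
        split_ifs with hc
        · have : u i = μ i.castSucc := by rw [hu]; simp [hc.1]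
          have h5 : μ i.castSucc = 0 := by rw [← this, hu0]; rfl
          rw [h5, mul_zero]
        · rw [zero_mul]
      rw [Finset.sum_congr rfl (fun i _ => hz i)]
      simp
    · exfalso
      apply hrgeJ
      set v : Fin n → ℝ := fun i => xbar i - (R/β) * u i with hv
      refine ⟨v, ?_, ?_⟩
      · intro i hi
        have hxi := hIJ' i hi
        rw [hg i] at hi
        have hui : u i = 0 := by rw [hu]; simp [hi]
        rw [hv]; simp [hxi, hui]
      · have hAv : A.mulVec v = A.mulVec xbar - (R/β) • A.mulVec u := by
          have : v = xbar - (R/β) • u := by funext i; simp [hv]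
          rw [this, Matrix.mulVec_sub, Matrix.mulVec_smul]
        have hAub : A.mulVec u = (-β) • ybar := by
          funext j
          have := hAu j
          simp only [Pi.smul_apply, smul_eq_mul]
          linarith
        rw [hAv, hAub]
        have hRy : R • ybar = b - A.mulVec xbar := by
          rw [hybar, smul_smul, mul_inv_cancel₀ (ne_of_gt hRpos), one_smul]
        have : (R/β) • (-β) • ybar = -(R • ybar) := by
          rw [smul_smul]
          have : R / β * (-β) = -R := by field_simp
          rw [this, neg_smul]
        rw [this, hRy]
        funext j
        simp
  obtain ⟨z0, hz0⟩ := fredholm M d hfred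
  have hylast : ∑ j, ybar j * z0 j = 0 := by
    have h0 := congrFun hz0 (Fin.last n)
    have h1 : M.mulVec z0 (Fin.last n) = ∑ j, ybar j * z0 j := by
      simp only [Matrix.mulVec, dotProduct]
      exact Finset.sum_congr rfl fun j _ => by simp only [hMlast j]
    rw [h1, hdlast] at h0
    exact h0
  set h : Fin n → ℝ := fun i => ∑ j, A j i * z0 j with hh
  have hcol : ∀ i, |g i| = lam → h i = (if xbar i = 0 then -(g i) else 0) := by
    intro i hgi
    have h0 := congrFun hz0 i.castSucc
    have h1 : M.mulVec z0 i.castSucc = h i := by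
      simp only [Matrix.mulVec, dotProduct, hh]
      refine Finset.sum_congr rfl fun j _ => ?_
      simp only [hMrow i j, if_pos hgi]
    rw [h1, hdrow i] at h0
    rw [h0]
    by_cases hx : xbar i = 0
    · rw [if_pos ⟨hgi, hx⟩, if_pos hx]
    · rw [if_neg (fun hc => hx hc.2), if_neg hx]
  have hev : ∀ᶠ t in 𝓝[>](0:ℝ), (0 < t ∧ t < 1) ∧
      ∀ i, xbar i = 0 → |g i + t * h i| < lam := by
    have e1 : ∀ᶠ t in 𝓝[>](0:ℝ), 0 < t ∧ t < 1 := by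
      filter_upwards [Ioo_mem_nhdsGT_of_mem (Set.left_mem_Ico.mpr one_pos)] with t ht
      exact ⟨ht.1, ht.2⟩
    have e2 : ∀ i, ∀ᶠ t in 𝓝[>](0:ℝ), xbar i = 0 → |g i + t * h i| < lam := by
      intro i
      by_cases hgi : |g i| = lam
      · filter_upwards [Ioo_mem_nhdsGT_of_mem (Set.left_mem_Ico.mpr one_pos)] with t ht hx
        have hhi : h i = -(g i) := by rw [hcol i hgi, if_pos hx]
        have he : g i + t * h i = (1-t) * g i := by rw [hhi]; ring
        rw [he, abs_mul, abs_of_nonneg (by linarith [ht.2] : (0:ℝ) ≤ 1 - t), hgi]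
        nlinarith [ht.1, ht.2, hlam]
      · have hlt : |g i| < lam := lt_of_le_of_ne (habs_le i) hgi
        have hcont : Tendsto (fun t : ℝ => |g i + t * h i|) (𝓝[>](0:ℝ)) (𝓝 |g i|) := by
          have hc : Continuous fun t : ℝ => |g i + t * h i| :=
            (continuous_const.add (continuous_id.mul continuous_const)).abs
          have h0 := hc.tendsto 0
          simp only [zero_mul, add_zero] at h0
          exact h0.mono_left nhdsWithin_le_nhds
        filter_upwards [hcont.eventually_lt_const hlt] with t ht hx
        exact ht
    filter_upwards [e1, eventually_all.mpr e2] with t h1 h2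
    exact ⟨h1, h2⟩
  obtain ⟨t, ⟨ht0, ht1⟩, hti⟩ := hev.exists
  refine ⟨t • z0, ?_, ?_, ?_⟩
  · show (∑ j, ybar j * (t • z0) j) = 0
    have : ∑ j, ybar j * (t • z0) j = t * ∑ j, ybar j * z0 j := by
      rw [Finset.mul_sum]
      exact Finset.sum_congr rfl fun j _ => by simp [smul_eq_mul]; ring
    rw [this, hylast, mul_zero]
  · intro i hx
    have hgi := hIJ i hx
    have hhi : h i = 0 := by rw [hcol i hgi, if_neg hx]
    show (∑ j, A j i * (t • z0) j) = 0
    have : ∑ j, A j i * (t • z0) j = t * h i := by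
      rw [hh, Finset.mul_sum]
      exact Finset.sum_congr rfl fun j _ => by simp [smul_eq_mul]; ring
    rw [this, hhi, mul_zero]
  · intro i hx
    have hsum : (∑ j, A j i * (ybar + t • z0) j) = g i + t * h i := by
      rw [hgdef, hh]
      simp only
      rw [Finset.mul_sum, ← Finset.sum_add_distrib]
      exact Finset.sum_congr rfl fun j _ => by simp [smul_eq_mul]; ring
    show |∑ j, A j i * (ybar + t • z0) j| < lam
    rw [hsum]
    exact hti i hx
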